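/- In the n-th Łukasiewicz chain Ł_n = {0, 1/n, ..., (n-1)/n, 1} with operations x ⊕ y = min(x+y, 1), x ⊙ y = max(x+y-1, 0), ¬x = 1-x, a subset S ⊆ Ł_n containing 0 and 1 and closed under ⊕, ⊙, ¬ equals Ł_d = {0, 1/d, ..., 1} for some divisor d of n; conversely, for every divisor d of n, the set {k/d : 0 ≤ k ≤ d} is closed under ⊕, ⊙, and ¬. -/

import Mathlib

open scoped Classical

/-- Subalgebras of the n-th Łukasiewicz chain `Ł_n ⊆ ℚ` are exactly the chains `Ł_d`
for divisors `d` of `n`. -/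
theorem stmt4 (n : ℕ) (hn : 0 < n)
    (Ln : Set ℚ) (hLn : Ln = {x : ℚ | ∃ k : ℕ, k ≤ n ∧ x = (k : ℚ) / n})
    (oplus odot : ℚ → ℚ → ℚ) (neg : ℚ → ℚ)
    (hoplus : ∀ x y, oplus x y = min (x + y) 1)
    (hodot : ∀ x y, odot x y = max (x + y - 1) 0)
    (hneg : ∀ x, neg x = 1 - x) :
    (∀ S : Set ℚ, S ⊆ Ln → (0 : ℚ) ∈ S → (1 : ℚ) ∈ S →
      (∀ x ∈ S, ∀ y ∈ S, oplus x y ∈ S) →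
      (∀ x ∈ S, ∀ y ∈ S, odot x y ∈ S) →
      (∀ x ∈ S, neg x ∈ S) →
      ∃ d : ℕ, d ∣ n ∧ 0 < d ∧ S = {x : ℚ | ∃ k : ℕ, k ≤ d ∧ x = (k : ℚ) / d}) ∧
    (∀ d : ℕ, d ∣ n → 0 < d →
      (∀ x ∈ {x : ℚ | ∃ k : ℕ, k ≤ d ∧ x = (k : ℚ) / d},
        ∀ y ∈ {x : ℚ | ∃ k : ℕ, k ≤ d ∧ x = (k : ℚ) / d},
          oplus x y ∈ {x : ℚ | ∃ k : ℕ, k ≤ d ∧ x = (k : ℚ) / d} ∧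
          odot x y ∈ {x : ℚ | ∃ k : ℕ, k ≤ d ∧ x = (k : ℚ) / d}) ∧
      (∀ x ∈ {x : ℚ | ∃ k : ℕ, k ≤ d ∧ x = (k : ℚ) / d},
        neg x ∈ {x : ℚ | ∃ k : ℕ, k ≤ d ∧ x = (k : ℚ) / d})) := by
  constructor
  · -- forward direction
    intro S hSLn h0 h1 hop hod hne
    have hn' : (0:ℚ) < (n:ℚ) := by exact_mod_cast hn
    have hnne : (n:ℚ) ≠ 0 := ne_of_gt hn'
    set K : Set ℕ := {k | k ≤ n ∧ (k : ℚ)/n ∈ S} with hKdef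
    have hmemS : ∀ x ∈ S, ∃ k, k ∈ K ∧ x = (k:ℚ)/n := by
      intro x hx
      have := hSLn hx
      rw [hLn] at this
      obtain ⟨k, hk, hxk⟩ := this
      exact ⟨k, ⟨hk, hxk ▸ hx⟩, hxk⟩
    have hnK : n ∈ K := ⟨le_refl n, by simpa [div_self hnne] using h1⟩
    have h0K : 0 ∈ K := ⟨Nat.zero_le n, by simpa using h0⟩
    -- closure under truncated subtraction
    have hsub : ∀ a ∈ K, ∀ b ∈ K, a - b ∈ K := by
      intro a ha b hb
      refine ⟨le_trans (Nat.sub_le a b) ha.1, ?_⟩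
      have hmem := hod _ ha.2 _ (hne _ hb.2)
      rw [hodot, hneg] at hmem
      have heq : ((a - b : ℕ) : ℚ)/n = max ((a:ℚ)/n + (1 - (b:ℚ)/n) - 1) 0 := by
        rcases le_or_gt a b with h | h
        · rw [Nat.sub_eq_zero_of_le h]
          have hab : (a:ℚ)/n ≤ (b:ℚ)/n := by
            gcongr
          rw [max_eq_right (by linarith)]
          simp
        · have hba : b ≤ a := le_of_lt h
          have hab : (b:ℚ)/n ≤ (a:ℚ)/n := by
            gcongr
          rw [max_eq_left (by linarith), Nat.cast_sub hba]
          ring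
      rwa [← heq] at hmem
    -- closure under truncated addition
    have hadd : ∀ a ∈ K, ∀ b ∈ K, min (a + b) n ∈ K := by
      intro a ha b hb
      refine ⟨min_le_right _ _, ?_⟩
      have hmem := hop _ ha.2 _ hb.2
      rw [hoplus] at hmem
      have heq : ((min (a+b) n : ℕ) : ℚ)/n = min ((a:ℚ)/n + (b:ℚ)/n) 1 := by
        rcases le_or_gt (a+b) n with h | h
        · rw [min_eq_left h]
          have : (a:ℚ)/n + (b:ℚ)/n ≤ 1 := by
            rw [← add_div, div_le_one hn']
            exact_mod_cast h
          rw [min_eq_left this]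
          push_cast; ring
        · rw [min_eq_right (le_of_lt h)]
          have : (1:ℚ) ≤ (a:ℚ)/n + (b:ℚ)/n := by
            rw [← add_div, le_div_iff₀ hn', one_mul]
            exact_mod_cast le_of_lt h
          rw [min_eq_right this, div_self hnne]
      rwa [← heq] at hmem
    -- least positive element
    have hex : ∃ k, 0 < k ∧ k ∈ K := ⟨n, hn, hnK⟩
    set g := Nat.find hex with hgdef
    obtain ⟨hgpos, hgK⟩ := Nat.find_spec hex
    have hmin : ∀ m < g, ¬(0 < m ∧ m ∈ K) := fun m hm => Nat.find_min hex hm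
    -- every element of K is a multiple of g
    have hdvd : ∀ a ∈ K, g ∣ a := by
      intro a ha
      have hiter : ∀ j : ℕ, a - j * g ∈ K := by
        intro j
        induction j with
        | zero => simpa using ha
        | succ j ih =>
          have : a - (j+1) * g = (a - j * g) - g := by
            rw [Nat.succ_mul, Nat.sub_sub]
          rw [this]
          exact hsub _ ih _ hgK
      have hmod : a % g ∈ K := by
        have : a % g = a - (a / g) * g := by
          have h2 := Nat.mod_add_div' a g
          omega
        rw [this]; exact hiter _
      have hlt : a % g < g := Nat.mod_lt a hgpos
      by_contra hnd
      have : 0 < a % g := Nat.pos_of_ne_zero (fun h => hnd (Nat.dvd_of_mod_eq_zero h))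
      exact hmin _ hlt ⟨this, hmod⟩
    have hgn : g ∣ n := hdvd n hnK
    -- all multiples of g up to n lie in K
    have hmul : ∀ k : ℕ, k * g ≤ n → k * g ∈ K := by
      intro k
      induction k with
      | zero => intro _; simpa using h0K
      | succ k ih =>
        intro hk
        have hk' : k * g ≤ n := le_trans (by nlinarith) hk
        have := hadd _ (ih hk') _ hgK
        have hmineq : min (k * g + g) n = (k+1) * g := by
          rw [min_eq_left]; · ring
          · calc k * g + g = (k+1) * g := by ring
            _ ≤ n := hk
        rwa [hmineq] at this
    refine ⟨n / g, Nat.div_dvd_of_dvd hgn, Nat.div_pos (Nat.le_of_dvd hn hgn) hgpos, ?_⟩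
    set d := n / g with hddef
    have hnd : n = d * g := (Nat.div_mul_cancel hgn).symm
    have hgne : (g:ℚ) ≠ 0 := by exact_mod_cast hgpos.ne'
    ext x
    simp only [Set.mem_setOf_eq]
    constructor
    · intro hx
      obtain ⟨k, hkK, hxk⟩ := hmemS x hx
      obtain ⟨m, hm⟩ := hdvd k hkK
      refine ⟨m, ?_, ?_⟩
      · have : m * g ≤ d * g := by rw [← hnd, mul_comm m g, ← hm]; exact hkK.1
        exact Nat.le_of_mul_le_mul_right this hgpos
      · rw [hxk, hm, hnd]
        push_cast
        rw [mul_comm (g:ℚ) (m:ℚ), mul_div_mul_right _ _ hgne]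
    · rintro ⟨k, hk, rfl⟩
      have hkg : k * g ≤ n := by rw [hnd]; exact Nat.mul_le_mul_right g hk
      have := (hmul k hkg).2
      have heq : ((k * g : ℕ) : ℚ)/n = (k:ℚ)/d := by
        rw [hnd]; push_cast
        rw [mul_div_mul_right _ _ hgne]
      rwa [heq] at this
  · -- converse direction
    intro d hdn hd
    have hd' : (0:ℚ) < (d:ℚ) := by exact_mod_cast hd
    have hdne : (d:ℚ) ≠ 0 := ne_of_gt hd'
    constructor
    · rintro x ⟨k, hk, rfl⟩ y ⟨l, hl, rfl⟩
      constructor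
      · rw [hoplus]
        rcases le_or_gt (k + l) d with h | h
        · refine ⟨k + l, h, ?_⟩
          have : (k:ℚ)/d + (l:ℚ)/d ≤ 1 := by
            rw [← add_div, div_le_one hd']; exact_mod_cast h
          rw [min_eq_left this]; push_cast; ring
        · refine ⟨d, le_refl d, ?_⟩
          have : (1:ℚ) ≤ (k:ℚ)/d + (l:ℚ)/d := by
            rw [← add_div, le_div_iff₀ hd', one_mul]
            exact_mod_cast le_of_lt h
          rw [min_eq_right this, div_self hdne]
      · rw [hodot]
        rcases le_or_gt (k + l) d with h | h
        · refine ⟨0, Nat.zero_le d, ?_⟩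
          have : (k:ℚ)/d + (l:ℚ)/d ≤ 1 := by
            rw [← add_div, div_le_one hd']; exact_mod_cast h
          rw [max_eq_right (by linarith)]; simp
        · refine ⟨k + l - d, by omega, ?_⟩
          have h1 : (1:ℚ) ≤ (k:ℚ)/d + (l:ℚ)/d := by
            rw [← add_div, le_div_iff₀ hd', one_mul]
            exact_mod_cast le_of_lt h
          rw [max_eq_left (by linarith)]
          have hcast : ((k + l - d : ℕ) : ℚ) = (k:ℚ) + l - d := by
            have hle : d ≤ k + l := le_of_lt h
            push_cast [hle]
            ring
          rw [hcast]
          field_simp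
    · rintro x ⟨k, hk, rfl⟩
      rw [hneg]
      refine ⟨d - k, Nat.sub_le d k, ?_⟩
      rw [Nat.cast_sub hk]
      field_simp
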